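/- The target-loss function T(L), defined as the optimal value of the minimization of I(U;V) − I(U;W) over conditional distributions p(u|v) supported on E subject to E[ℓ(V,U,W)] ≤ L, is decreasing and convex as a function of L ∈ [0, ∞) (with value +∞ where infeasible). -/
import Mathlib


open Real

noncomputable section

variable {V U W : Type*} [Fintype V] [Fintype U] [Fintype W]
  [DecidableEq V] [DecidableEq U]

/-- `q(u|v)` is a conditional distribution supported on the edge set `E`. -/
def CondDistOn (E : Finset (V × U)) (q : V → U → ℝ) : Prop :=
  (∀ v u, 0 ≤ q v u) ∧ (∀ v, ∑ u, q v u = 1) ∧ (∀ v u, q v u ≠ 0 → (v, u) ∈ E)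

/-- Generalized K-L divergence `GD_E(q‖r)`. -/
def GDE (E : Finset (V × U)) (p : V → ℝ) (pw : V → U → W → ℝ)
    (q : V → U → ℝ) (r : W → U → ℝ) : ℝ :=
  ∑ v, ∑ u, ∑ w, if (v, u) ∈ E then p v * q v u * pw v u w * Real.log (q v u / r w u) else 0

/-- Expected loss `Loss(q) = Σ p(v) q(u|v) ℓ̃(v,u)`. -/
def LossE (E : Finset (V × U)) (p : V → ℝ) (lt : V → U → ℝ) (q : V → U → ℝ) : ℝ :=
  ∑ v, ∑ u, if (v, u) ∈ E then p v * q v u * lt v u else 0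

/-- The joint distribution `p(v,u,w) = p(v) q(u|v) p(w|u,v)`. -/
def jointD (E : Finset (V × U)) (p : V → ℝ) (pw : V → U → W → ℝ) (q : V → U → ℝ)
    (v : V) (u : U) (w : W) : ℝ :=
  if (v, u) ∈ E then p v * q v u * pw v u w else 0

/-- Marginal `p(u)`. -/
def margU (p : V → ℝ) (q : V → U → ℝ) (u : U) : ℝ := ∑ v, p v * q v u

/-- Marginal `p(u,w)`. -/
def margUW (E : Finset (V × U)) (p : V → ℝ) (pw : V → U → W → ℝ) (q : V → U → ℝ)
    (u : U) (w : W) : ℝ := ∑ v, jointD E p pw q v u w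

/-- Marginal `p(w)`. -/
def margW (E : Finset (V × U)) (p : V → ℝ) (pw : V → U → W → ℝ) (q : V → U → ℝ)
    (w : W) : ℝ := ∑ u, margUW E p pw q u w

/-- Mutual information `I(U;V)`. -/
def IUV (p : V → ℝ) (q : V → U → ℝ) : ℝ :=
  ∑ v, ∑ u, p v * q v u * Real.log (q v u / margU p q u)

/-- Mutual information `I(U;W)`. -/
def IUW (E : Finset (V × U)) (p : V → ℝ) (pw : V → U → W → ℝ) (q : V → U → ℝ) : ℝ :=
  ∑ u, ∑ w, margUW E p pw q u w *
    Real.log (margUW E p pw q u w / (margU p q u * margW E p pw q w))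

/-- Objective `I(U;V) - I(U;W)`. -/
def Obj (E : Finset (V × U)) (p : V → ℝ) (pw : V → U → W → ℝ) (q : V → U → ℝ) : ℝ :=
  IUV p q - IUW E p pw q

/-- The induced conditional distribution `r*(q)(u|w)`. -/
def rstar (E : Finset (V × U)) (p : V → ℝ) (pw : V → U → W → ℝ) (q : V → U → ℝ)
    (w : W) (u : U) : ℝ := margUW E p pw q u w / margW E p pw q w

/-- Gibbs update `q_s^*(r)(u|v)`. -/
def qstar (E : Finset (V × U)) (pw : V → U → W → ℝ) (lt : V → U → ℝ)
    (s : ℝ) (r : W → U → ℝ) (v : V) (u : U) : ℝ :=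
  (if (v, u) ∈ E then Real.exp (-s * lt v u) * ∏ w', r w' u ^ pw v u w' else 0) /
  (∑ u', if (v, u') ∈ E then Real.exp (-s * lt v u') * ∏ w', r w' u' ^ pw v u' w' else 0)

/-- The penalty (Lagrangian) function `F_s(q,r)`. -/
def FPen (E : Finset (V × U)) (p : V → ℝ) (pw : V → U → W → ℝ) (lt : V → U → ℝ)
    (s : ℝ) (q : V → U → ℝ) (r : W → U → ℝ) : ℝ :=
  GDE E p pw q r + s * LossE E p lt q

/-- Generalized K-L divergence between two conditional distributions on `E`. -/
def GDcond (E : Finset (V × U)) (p : V → ℝ) (q1 q2 : V → U → ℝ) : ℝ :=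
  ∑ v, ∑ u, if (v, u) ∈ E then p v * q1 v u * Real.log (q1 v u / q2 v u) else 0

/-- Conditional K-L divergence `GD_q(r1‖r2)` weighted by `q(w)`. -/
def GDr (E : Finset (V × U)) (p : V → ℝ) (pw : V → U → W → ℝ) (q : V → U → ℝ)
    (r1 r2 : W → U → ℝ) : ℝ :=
  ∑ u, ∑ w, margW E p pw q w * r1 w u * Real.log (r1 w u / r2 w u)

/-- The target-loss function `T(L)` (valued in `EReal`, `+∞` if infeasible). -/
def TL (E : Finset (V × U)) (p : V → ℝ) (pw : V → U → W → ℝ) (lt : V → U → ℝ)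
    (L : ℝ) : EReal :=
  sInf {x : EReal | ∃ q, CondDistOn E q ∧ LossE E p lt q ≤ L ∧ x = (Obj E p pw q : EReal)}


set_option linter.unusedSectionVars false

section Helpers

variable (E : Finset (V × U)) (p : V → ℝ) (pw : V → U → W → ℝ)

lemma pt_basic {a b : ℝ} (ha : 0 ≤ a) (hb : 0 ≤ b) (h : 0 < a → 0 < b) :
    a - b ≤ a * Real.log (a / b) := by
  rcases eq_or_lt_of_le ha with h0 | ha'
  · simp [← h0]; linarith
  · have hb' := h ha'
    have key := Real.log_le_sub_one_of_pos (div_pos hb' ha')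
    have hlog : Real.log (a / b) = - Real.log (b / a) := by
      rw [← Real.log_inv]; congr 1; rw [inv_div]
    have h2 : a * Real.log (b / a) ≤ a * (b / a - 1) :=
      mul_le_mul_of_nonneg_left key ha'.le
    have h3 : a * (b / a) = b := by field_simp
    rw [hlog]; nlinarith

lemma pt_shift {a b c : ℝ} (ha : 0 ≤ a) (hb : 0 ≤ b) (h : 0 < a → 0 < b) (hc : 0 < c) :
    a * Real.log c + (a - b * c) ≤ a * Real.log (a / b) := by
  rcases eq_or_lt_of_le ha with h0 | ha'
  · simp [← h0]; positivity
  · have hb' := h ha'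
    have hbc : 0 < b * c := mul_pos hb' hc
    have key : a - b * c ≤ a * Real.log (a / (b * c)) :=
      pt_basic ha hbc.le (fun _ => hbc)
    have hsplit : Real.log (a / (b * c)) = Real.log (a / b) - Real.log c := by
      rw [← div_div, Real.log_div (by positivity) hc.ne']
    rw [hsplit] at key; nlinarith

lemma pt_convex {a1 a2 b1 b2 al be : ℝ}
    (ha1 : 0 ≤ a1) (ha2 : 0 ≤ a2) (hb1 : 0 ≤ b1) (hb2 : 0 ≤ b2)
    (h1 : 0 < a1 → 0 < b1) (h2 : 0 < a2 → 0 < b2)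
    (hal : 0 < al) (hbe : 0 < be) (hs : be + al = 1) :
    (be * a1 + al * a2) * Real.log ((be * a1 + al * a2) / (be * b1 + al * b2)) ≤
      be * (a1 * Real.log (a1 / b1)) + al * (a2 * Real.log (a2 / b2)) := by
  set A := be * a1 + al * a2 with hA
  set B := be * b1 + al * b2 with hB
  have hA0 : 0 ≤ A := by positivity
  rcases eq_or_lt_of_le hA0 with h0 | hA'
  · have ha1' : a1 = 0 := by nlinarith
    have ha2' : a2 = 0 := by nlinarith
    simp [← h0, ha1', ha2']
  · have hB' : 0 < B := by
      rcases lt_or_ge 0 a1 with h | h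
      · have := h1 h; nlinarith
      · have ha1' : a1 = 0 := le_antisymm h ha1
        have : 0 < a2 := by nlinarith
        have := h2 this; nlinarith
    have hc : 0 < A / B := div_pos hA' hB'
    have k1 := pt_shift ha1 hb1 h1 hc
    have k2 := pt_shift ha2 hb2 h2 hc
    have k1' := mul_le_mul_of_nonneg_left k1 hbe.le
    have k2' := mul_le_mul_of_nonneg_left k2 hal.le
    have hBc : B * (A / B) = A := by field_simp
    nlinarith

variable {q : V → U → ℝ}

lemma margU_nonneg (hp : ∀ v, 0 < p v) (hq : CondDistOn E q) (u : U) :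
    0 ≤ margU p q u :=
  Finset.sum_nonneg fun v _ => mul_nonneg (hp v).le (hq.1 v u)

lemma margU_pos (hp : ∀ v, 0 < p v) (hq : CondDistOn E q) {v : V} {u : U}
    (h : q v u ≠ 0) : 0 < margU p q u := by
  have h1 : 0 < p v * q v u := mul_pos (hp v) ((hq.1 v u).lt_of_ne (Ne.symm h))
  have h2 : p v * q v u ≤ margU p q u :=
    Finset.single_le_sum (f := fun v' => p v' * q v' u)
      (fun v' _ => mul_nonneg (hp v').le (hq.1 v' u)) (Finset.mem_univ v)
  linarith

lemma sum_margU (hp1 : ∑ v, p v = 1) (hq : CondDistOn E q) :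
    ∑ u, margU p q u = 1 := by
  unfold margU
  rw [Finset.sum_comm]
  have h : ∀ v ∈ Finset.univ, ∑ u, p v * q v u = p v := fun v _ => by
    rw [← Finset.mul_sum, hq.2.1 v, mul_one]
  rw [Finset.sum_congr rfl h, hp1]

lemma jointD_nonneg (hp : ∀ v, 0 < p v) (hq : CondDistOn E q)
    (hpw0 : ∀ v u w, 0 ≤ pw v u w) (v : V) (u : U) (w : W) :
    0 ≤ jointD E p pw q v u w := by
  unfold jointD
  split
  · exact mul_nonneg (mul_nonneg (hp v).le (hq.1 v u)) (hpw0 v u w)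
  · exact le_refl 0

lemma margUW_nonneg (hp : ∀ v, 0 < p v) (hq : CondDistOn E q)
    (hpw0 : ∀ v u w, 0 ≤ pw v u w) (u : U) (w : W) :
    0 ≤ margUW E p pw q u w :=
  Finset.sum_nonneg fun v _ => jointD_nonneg E p pw hp hq hpw0 v u w

lemma margW_nonneg (hp : ∀ v, 0 < p v) (hq : CondDistOn E q)
    (hpw0 : ∀ v u w, 0 ≤ pw v u w) (w : W) :
    0 ≤ margW E p pw q w :=
  Finset.sum_nonneg fun u _ => margUW_nonneg E p pw hp hq hpw0 u w

lemma margUW_sum_w (hq : CondDistOn E q)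
    (hpw1 : ∀ v u, (v, u) ∈ E → ∑ w, pw v u w = 1) (u : U) :
    ∑ w, margUW E p pw q u w = margU p q u := by
  unfold margUW margU
  rw [Finset.sum_comm]
  refine Finset.sum_congr rfl fun v _ => ?_
  unfold jointD
  by_cases hE : (v, u) ∈ E
  · simp only [hE, if_true, ← Finset.mul_sum, hpw1 v u hE, mul_one]
  · have hq0 : q v u = 0 := by
      by_contra h; exact hE (hq.2.2 v u h)
    simp [hE, hq0]

lemma sum_margW (hp1 : ∑ v, p v = 1) (hq : CondDistOn E q)
    (hpw1 : ∀ v u, (v, u) ∈ E → ∑ w, pw v u w = 1) :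
    ∑ w, margW E p pw q w = 1 := by
  unfold margW
  rw [Finset.sum_comm]
  rw [Finset.sum_congr rfl fun u _ => margUW_sum_w E p pw hq hpw1 u]
  exact sum_margU E p hp1 hq

lemma margUW_le_margU (hp : ∀ v, 0 < p v) (hq : CondDistOn E q)
    (hpw0 : ∀ v u w, 0 ≤ pw v u w)
    (hpw1 : ∀ v u, (v, u) ∈ E → ∑ w, pw v u w = 1) (u : U) (w : W) :
    margUW E p pw q u w ≤ margU p q u := by
  unfold margUW margU
  refine Finset.sum_le_sum fun v _ => ?_
  unfold jointD
  by_cases hE : (v, u) ∈ E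
  · have hle : pw v u w ≤ 1 := by
      rw [← hpw1 v u hE]
      exact Finset.single_le_sum (f := fun w' => pw v u w')
        (fun w' _ => hpw0 v u w') (Finset.mem_univ w)
    simp only [hE, if_true]
    calc p v * q v u * pw v u w ≤ p v * q v u * 1 :=
          mul_le_mul_of_nonneg_left hle (mul_nonneg (hp v).le (hq.1 v u))
      _ = p v * q v u := mul_one _
  · simp only [hE, if_false]
    exact mul_nonneg (hp v).le (hq.1 v u)

lemma margUW_le_margW (hp : ∀ v, 0 < p v) (hq : CondDistOn E q)
    (hpw0 : ∀ v u w, 0 ≤ pw v u w) (u : U) (w : W) :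
    margUW E p pw q u w ≤ margW E p pw q w :=
  Finset.single_le_sum (f := fun u' => margUW E p pw q u' w)
    (fun u' _ => margUW_nonneg E p pw hp hq hpw0 u' w) (Finset.mem_univ u)

lemma margW_le_one (hp : ∀ v, 0 < p v) (hp1 : ∑ v, p v = 1) (hq : CondDistOn E q)
    (hpw0 : ∀ v u w, 0 ≤ pw v u w)
    (hpw1 : ∀ v u, (v, u) ∈ E → ∑ w, pw v u w = 1) (w : W) :
    margW E p pw q w ≤ 1 := by
  rw [← sum_margW E p pw hp1 hq hpw1]
  exact Finset.single_le_sum (f := fun w' => margW E p pw q w')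
    (fun w' _ => margW_nonneg E p pw hp hq hpw0 w') (Finset.mem_univ w)

lemma jointD_le_margUW (hp : ∀ v, 0 < p v) (hq : CondDistOn E q)
    (hpw0 : ∀ v u w, 0 ≤ pw v u w) (v : V) (u : U) (w : W) :
    jointD E p pw q v u w ≤ margUW E p pw q u w :=
  Finset.single_le_sum (f := fun v' => jointD E p pw q v' u w)
    (fun v' _ => jointD_nonneg E p pw hp hq hpw0 v' u w) (Finset.mem_univ v)

lemma sum_margW_mul (f : W → ℝ) :
    ∑ w, margW E p pw q w * f w = ∑ u, ∑ w, margUW E p pw q u w * f w := by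
  rw [Finset.sum_comm]
  refine Finset.sum_congr rfl fun w _ => ?_
  rw [margW, Finset.sum_mul]

lemma IUV_expand (hp : ∀ v, 0 < p v) (hq : CondDistOn E q) :
    IUV p q = (∑ v, ∑ u, p v * q v u * Real.log (q v u))
      - ∑ u, margU p q u * Real.log (margU p q u) := by
  unfold IUV
  have key : ∀ v u, p v * q v u * Real.log (q v u / margU p q u)
      = p v * q v u * Real.log (q v u) - p v * q v u * Real.log (margU p q u) := by
    intro v u
    by_cases h : q v u = 0
    · simp [h]
    · rw [Real.log_div h (margU_pos E p hp hq h).ne', mul_sub]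
  simp_rw [key, Finset.sum_sub_distrib]
  congr 1
  rw [Finset.sum_comm]
  refine Finset.sum_congr rfl fun u _ => ?_
  rw [margU, Finset.sum_mul]

lemma IUW_expand (hp : ∀ v, 0 < p v) (hq : CondDistOn E q)
    (hpw0 : ∀ v u w, 0 ≤ pw v u w)
    (hpw1 : ∀ v u, (v, u) ∈ E → ∑ w, pw v u w = 1) :
    IUW E p pw q = (∑ u, ∑ w, margUW E p pw q u w * Real.log (margUW E p pw q u w))
      - (∑ u, margU p q u * Real.log (margU p q u))
      - (∑ w, margW E p pw q w * Real.log (margW E p pw q w)) := by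
  unfold IUW
  have key : ∀ u w, margUW E p pw q u w *
        Real.log (margUW E p pw q u w / (margU p q u * margW E p pw q w))
      = margUW E p pw q u w * Real.log (margUW E p pw q u w)
        - margUW E p pw q u w * Real.log (margU p q u)
        - margUW E p pw q u w * Real.log (margW E p pw q w) := by
    intro u w
    by_cases h : margUW E p pw q u w = 0
    · simp [h]
    · have hm : 0 < margUW E p pw q u w :=
        (margUW_nonneg E p pw hp hq hpw0 u w).lt_of_ne (Ne.symm h)
      have hu : 0 < margU p q u := lt_of_lt_of_le hm (margUW_le_margU E p pw hp hq hpw0 hpw1 u w)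
      have hw : 0 < margW E p pw q w := lt_of_lt_of_le hm (margUW_le_margW E p pw hp hq hpw0 u w)
      rw [Real.log_div h (mul_ne_zero hu.ne' hw.ne'), Real.log_mul hu.ne' hw.ne']
      ring
  simp_rw [key, Finset.sum_sub_distrib]
  congr 1
  · congr 1
    refine Finset.sum_congr rfl fun u _ => ?_
    rw [← Finset.sum_mul, margUW_sum_w E p pw hq hpw1]
  · rw [sum_margW_mul E p pw]

lemma GDE_expand (hp : ∀ v, 0 < p v) (hq : CondDistOn E q)
    (hpw0 : ∀ v u w, 0 ≤ pw v u w)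
    (hpw1 : ∀ v u, (v, u) ∈ E → ∑ w, pw v u w = 1)
    (r : W → U → ℝ) (hr : ∀ u w, margUW E p pw q u w ≠ 0 → r w u ≠ 0) :
    GDE E p pw q r = (∑ v, ∑ u, p v * q v u * Real.log (q v u))
      - ∑ u, ∑ w, margUW E p pw q u w * Real.log (r w u) := by
  unfold GDE
  have key : ∀ v u w, (if (v, u) ∈ E then p v * q v u * pw v u w * Real.log (q v u / r w u) else 0)
      = (if (v, u) ∈ E then p v * q v u * pw v u w * Real.log (q v u) else 0)
        - jointD E p pw q v u w * Real.log (r w u) := by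
    intro v u w
    unfold jointD
    by_cases hE : (v, u) ∈ E
    · simp only [hE, if_true]
      by_cases hq0 : q v u = 0
      · simp [hq0]
      · by_cases hpw' : pw v u w = 0
        · simp [hpw']
        · have hj : 0 < jointD E p pw q v u w := by
            unfold jointD
            rw [if_pos hE]
            exact mul_pos (mul_pos (hp v) ((hq.1 v u).lt_of_ne (Ne.symm hq0)))
              ((hpw0 v u w).lt_of_ne (Ne.symm hpw'))
          have hm : margUW E p pw q u w ≠ 0 :=
            (lt_of_lt_of_le hj (jointD_le_margUW E p pw hp hq hpw0 v u w)).ne'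
          rw [Real.log_div hq0 (hr u w hm), mul_sub]
    · simp [hE]
  simp_rw [key, Finset.sum_sub_distrib]
  congr 1
  · refine Finset.sum_congr rfl fun v _ => Finset.sum_congr rfl fun u _ => ?_
    by_cases hE : (v, u) ∈ E
    · simp only [hE, if_true]
      have : ∀ w, p v * q v u * pw v u w * Real.log (q v u)
          = (p v * q v u * Real.log (q v u)) * pw v u w := fun w => by ring
      simp_rw [this, ← Finset.mul_sum, hpw1 v u hE, mul_one]
    · have hq0 : q v u = 0 := by
        by_contra h; exact hE (hq.2.2 v u h)
      simp [hE, hq0]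
  · rw [Finset.sum_comm]
    refine Finset.sum_congr rfl fun u _ => ?_
    rw [Finset.sum_comm]
    refine Finset.sum_congr rfl fun w _ => ?_
    rw [margUW, Finset.sum_mul]

lemma gde_sub_obj (hp : ∀ v, 0 < p v) (hq : CondDistOn E q)
    (hpw0 : ∀ v u w, 0 ≤ pw v u w)
    (hpw1 : ∀ v u, (v, u) ∈ E → ∑ w, pw v u w = 1)
    (r : W → U → ℝ) (hr : ∀ u w, margUW E p pw q u w ≠ 0 → r w u ≠ 0) :
    GDE E p pw q r = Obj E p pw q
      + ∑ u, ∑ w, margUW E p pw q u w *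
          (Real.log (margUW E p pw q u w) - Real.log (margW E p pw q w) - Real.log (r w u)) := by
  have hcw : ∑ w, margW E p pw q w * Real.log (margW E p pw q w)
      = ∑ u, ∑ w, margUW E p pw q u w * Real.log (margW E p pw q w) :=
    sum_margW_mul E p pw _
  rw [Obj, IUV_expand E p hp hq, IUW_expand E p pw hp hq hpw0 hpw1,
    GDE_expand E p pw hp hq hpw0 hpw1 r hr]
  simp_rw [mul_sub, Finset.sum_sub_distrib]
  rw [← hcw]
  ring

lemma obj_le_gde (hp : ∀ v, 0 < p v) (hp1 : ∑ v, p v = 1) (hq : CondDistOn E q)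
    (hpw0 : ∀ v u w, 0 ≤ pw v u w)
    (hpw1 : ∀ v u, (v, u) ∈ E → ∑ w, pw v u w = 1)
    (r : W → U → ℝ) (hr0 : ∀ w u, 0 ≤ r w u) (hr1 : ∀ w, ∑ u, r w u ≤ 1)
    (hr : ∀ u w, margUW E p pw q u w ≠ 0 → r w u ≠ 0) :
    Obj E p pw q ≤ GDE E p pw q r := by
  rw [gde_sub_obj E p pw hp hq hpw0 hpw1 r hr]
  have key : ∀ u w, margUW E p pw q u w - margW E p pw q w * r w u
      ≤ margUW E p pw q u w *
          (Real.log (margUW E p pw q u w) - Real.log (margW E p pw q w) - Real.log (r w u)) := by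
    intro u w
    by_cases h : margUW E p pw q u w = 0
    · simp only [h, zero_mul, zero_sub]
      exact neg_nonpos.mpr (mul_nonneg (margW_nonneg E p pw hp hq hpw0 w) (hr0 w u))
    · have hm : 0 < margUW E p pw q u w :=
        (margUW_nonneg E p pw hp hq hpw0 u w).lt_of_ne (Ne.symm h)
      have hw : 0 < margW E p pw q w := lt_of_lt_of_le hm (margUW_le_margW E p pw hp hq hpw0 u w)
      have hru : 0 < r w u := (hr0 w u).lt_of_ne (Ne.symm (hr u w h))
      have hwr : 0 < margW E p pw q w * r w u := mul_pos hw hru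
      have := pt_basic hm.le hwr.le (fun _ => hwr)
      rw [Real.log_div h hwr.ne', Real.log_mul hw.ne' hru.ne'] at this
      linarith [this]
  have hsum : (0:ℝ) ≤ ∑ u, ∑ w, margUW E p pw q u w *
      (Real.log (margUW E p pw q u w) - Real.log (margW E p pw q w) - Real.log (r w u)) := by
    have h1 : ∑ u, ∑ w, (margUW E p pw q u w - margW E p pw q w * r w u)
        ≤ ∑ u, ∑ w, margUW E p pw q u w *
          (Real.log (margUW E p pw q u w) - Real.log (margW E p pw q w) - Real.log (r w u)) :=
      Finset.sum_le_sum fun u _ => Finset.sum_le_sum fun w _ => key u w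
    have h2 : ∑ u, ∑ w, (margUW E p pw q u w - margW E p pw q w * r w u)
        = 1 - ∑ w, margW E p pw q w * ∑ u, r w u := by
      simp_rw [Finset.sum_sub_distrib]
      have ha : ∑ u, ∑ w, margUW E p pw q u w = 1 := by
        rw [Finset.sum_congr rfl fun u _ => margUW_sum_w E p pw hq hpw1 u]
        exact sum_margU E p hp1 hq
      have hb : ∑ u, ∑ w, margW E p pw q w * r w u
          = ∑ w, margW E p pw q w * ∑ u, r w u := by
        rw [Finset.sum_comm]
        exact Finset.sum_congr rfl fun w _ => (Finset.mul_sum _ _ _).symm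
      rw [ha, hb]
    have h3 : ∑ w, margW E p pw q w * ∑ u, r w u ≤ 1 := by
      calc ∑ w, margW E p pw q w * ∑ u, r w u ≤ ∑ w, margW E p pw q w * 1 :=
            Finset.sum_le_sum fun w _ =>
              mul_le_mul_of_nonneg_left (hr1 w) (margW_nonneg E p pw hp hq hpw0 w)
        _ = 1 := by simp_rw [mul_one]; exact sum_margW E p pw hp1 hq hpw1
    linarith
  linarith

lemma rstar_nonneg (hp : ∀ v, 0 < p v) (hq : CondDistOn E q)
    (hpw0 : ∀ v u w, 0 ≤ pw v u w) (w : W) (u : U) :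
    0 ≤ rstar E p pw q w u :=
  div_nonneg (margUW_nonneg E p pw hp hq hpw0 u w) (margW_nonneg E p pw hp hq hpw0 w)

lemma rstar_sum_le_one (hp : ∀ v, 0 < p v) (hq : CondDistOn E q)
    (hpw0 : ∀ v u w, 0 ≤ pw v u w) (w : W) :
    ∑ u, rstar E p pw q w u ≤ 1 := by
  unfold rstar
  rw [← Finset.sum_div]
  by_cases h : margW E p pw q w = 0
  · simp [h]
  · rw [← margW]
    rw [div_self h]

lemma rstar_ne_zero (hp : ∀ v, 0 < p v) (hq : CondDistOn E q)
    (hpw0 : ∀ v u w, 0 ≤ pw v u w) {u : U} {w : W}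
    (h : margUW E p pw q u w ≠ 0) : rstar E p pw q w u ≠ 0 := by
  have hm : 0 < margUW E p pw q u w :=
    (margUW_nonneg E p pw hp hq hpw0 u w).lt_of_ne (Ne.symm h)
  have hw : 0 < margW E p pw q w := lt_of_lt_of_le hm (margUW_le_margW E p pw hp hq hpw0 u w)
  exact (div_pos hm hw).ne'

lemma obj_eq_gde_rstar (hp : ∀ v, 0 < p v) (hq : CondDistOn E q)
    (hpw0 : ∀ v u w, 0 ≤ pw v u w)
    (hpw1 : ∀ v u, (v, u) ∈ E → ∑ w, pw v u w = 1) :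
    GDE E p pw q (rstar E p pw q) = Obj E p pw q := by
  rw [gde_sub_obj E p pw hp hq hpw0 hpw1 _ (fun u w h => rstar_ne_zero E p pw hp hq hpw0 h)]
  have key : ∀ u w, margUW E p pw q u w *
      (Real.log (margUW E p pw q u w) - Real.log (margW E p pw q w)
        - Real.log (rstar E p pw q w u)) = 0 := by
    intro u w
    by_cases h : margUW E p pw q u w = 0
    · simp [h]
    · have hm : 0 < margUW E p pw q u w :=
        (margUW_nonneg E p pw hp hq hpw0 u w).lt_of_ne (Ne.symm h)
      have hw : 0 < margW E p pw q w := lt_of_lt_of_le hm (margUW_le_margW E p pw hp hq hpw0 u w)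
      rw [rstar, Real.log_div h hw.ne']
      ring
  simp_rw [key, Finset.sum_const_zero, add_zero]

end Helpers

/-- Pointwise mixture of two kernels. -/
def mixK (be al : ℝ) (f g : V → U → ℝ) : V → U → ℝ := fun v u => be * f v u + al * g v u

lemma mixK_apply (be al : ℝ) (f g : V → U → ℝ) (v : V) (u : U) :
    mixK be al f g v u = be * f v u + al * g v u := rfl

section Mix

variable (E : Finset (V × U)) (p : V → ℝ) (pw : V → U → W → ℝ)
variable {q1 q2 : V → U → ℝ} {be al : ℝ}

lemma mix_cond (hq1 : CondDistOn E q1) (hq2 : CondDistOn E q2)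
    (hbe : 0 ≤ be) (hal : 0 ≤ al) (hs : be + al = 1) :
    CondDistOn E (mixK be al q1 q2) := by
  refine ⟨fun v u => ?_, fun v => ?_, fun v u h => ?_⟩
  · exact add_nonneg (mul_nonneg hbe (hq1.1 v u)) (mul_nonneg hal (hq2.1 v u))
  · unfold mixK
    rw [Finset.sum_add_distrib, ← Finset.mul_sum, ← Finset.mul_sum, hq1.2.1 v, hq2.2.1 v]
    linarith
  · rw [mixK_apply] at h
    by_cases h1 : q1 v u = 0
    · by_cases h2 : q2 v u = 0
      · exact absurd (by rw [h1, h2]; ring) h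
      · exact hq2.2.2 v u h2
    · exact hq1.2.2 v u h1

lemma margUW_mix (u : U) (w : W) :
    margUW E p pw (mixK be al q1 q2) u w
      = be * margUW E p pw q1 u w + al * margUW E p pw q2 u w := by
  unfold margUW jointD
  rw [Finset.mul_sum, Finset.mul_sum, ← Finset.sum_add_distrib]
  refine Finset.sum_congr rfl fun v _ => ?_
  by_cases hE : (v, u) ∈ E
  · simp only [hE, if_true, mixK_apply]; ring
  · simp [hE]

lemma margW_mix (w : W) :
    margW E p pw (mixK be al q1 q2) w
      = be * margW E p pw q1 w + al * margW E p pw q2 w := by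
  unfold margW
  rw [Finset.mul_sum, Finset.mul_sum, ← Finset.sum_add_distrib]
  exact Finset.sum_congr rfl fun u _ => margUW_mix E p pw u w

lemma LossE_mix (lt : V → U → ℝ) :
    LossE E p lt (mixK be al q1 q2) = be * LossE E p lt q1 + al * LossE E p lt q2 := by
  unfold LossE
  rw [Finset.mul_sum, Finset.mul_sum, ← Finset.sum_add_distrib]
  refine Finset.sum_congr rfl fun v _ => ?_
  rw [Finset.mul_sum, Finset.mul_sum, ← Finset.sum_add_distrib]
  refine Finset.sum_congr rfl fun u _ => ?_
  by_cases hE : (v, u) ∈ E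
  · simp only [hE, if_true, mixK_apply]; ring
  · simp [hE]

lemma gde_mix_le (hp : ∀ v, 0 < p v)
    (hpw0 : ∀ v u w, 0 ≤ pw v u w)
    (r1 r2 : W → U → ℝ) (hr10 : ∀ w u, 0 ≤ r1 w u) (hr20 : ∀ w u, 0 ≤ r2 w u)
    (hr1p : ∀ v u w, (v, u) ∈ E → q1 v u ≠ 0 → pw v u w ≠ 0 → 0 < r1 w u)
    (hr2p : ∀ v u w, (v, u) ∈ E → q2 v u ≠ 0 → pw v u w ≠ 0 → 0 < r2 w u)
    (hq10 : ∀ v u, 0 ≤ q1 v u) (hq20 : ∀ v u, 0 ≤ q2 v u)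
    (hbe : 0 < be) (hal : 0 < al) (hs : be + al = 1) :
    GDE E p pw (mixK be al q1 q2) (fun w u => be * r1 w u + al * r2 w u)
      ≤ be * GDE E p pw q1 r1 + al * GDE E p pw q2 r2 := by
  unfold GDE
  rw [Finset.mul_sum, Finset.mul_sum, ← Finset.sum_add_distrib]
  refine Finset.sum_le_sum fun v _ => ?_
  rw [Finset.mul_sum, Finset.mul_sum, ← Finset.sum_add_distrib]
  refine Finset.sum_le_sum fun u _ => ?_
  rw [Finset.mul_sum, Finset.mul_sum, ← Finset.sum_add_distrib]
  refine Finset.sum_le_sum fun w _ => ?_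
  by_cases hE : (v, u) ∈ E
  · simp only [hE, if_true, mixK_apply]
    by_cases hpw' : pw v u w = 0
    · simp [hpw']
    · have hc : (0:ℝ) ≤ p v * pw v u w := mul_nonneg (hp v).le (hpw0 v u w)
      have hkey := pt_convex (hq10 v u) (hq20 v u) (hr10 w u) (hr20 w u)
        (fun h => hr1p v u w hE h.ne' hpw') (fun h => hr2p v u w hE h.ne' hpw')
        hal hbe hs
      calc p v * (be * q1 v u + al * q2 v u) * pw v u w *
            Real.log ((be * q1 v u + al * q2 v u) / (be * r1 w u + al * r2 w u))
          = (p v * pw v u w) * ((be * q1 v u + al * q2 v u) *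
            Real.log ((be * q1 v u + al * q2 v u) / (be * r1 w u + al * r2 w u))) := by ring
        _ ≤ (p v * pw v u w) * (be * (q1 v u * Real.log (q1 v u / r1 w u))
              + al * (q2 v u * Real.log (q2 v u / r2 w u))) :=
            mul_le_mul_of_nonneg_left hkey hc
        _ = be * (p v * q1 v u * pw v u w * Real.log (q1 v u / r1 w u))
              + al * (p v * q2 v u * pw v u w * Real.log (q2 v u / r2 w u)) := by ring
  · simp [hE]

lemma obj_mix_le (hp : ∀ v, 0 < p v) (hp1 : ∑ v, p v = 1)
    (hq1 : CondDistOn E q1) (hq2 : CondDistOn E q2)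
    (hpw0 : ∀ v u w, 0 ≤ pw v u w)
    (hpw1 : ∀ v u, (v, u) ∈ E → ∑ w, pw v u w = 1)
    (hbe : 0 < be) (hal : 0 < al) (hs : be + al = 1) :
    Obj E p pw (mixK be al q1 q2) ≤ be * Obj E p pw q1 + al * Obj E p pw q2 := by
  set r1 := rstar E p pw q1 with hr1
  set r2 := rstar E p pw q2 with hr2
  have hmixc : CondDistOn E (mixK be al q1 q2) := mix_cond E hq1 hq2 hbe.le hal.le hs
  have hr1p : ∀ v u w, (v, u) ∈ E → q1 v u ≠ 0 → pw v u w ≠ 0 → 0 < r1 w u := by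
    intro v u w hE hq0 hpw'
    have hj : 0 < jointD E p pw q1 v u w := by
      unfold jointD
      rw [if_pos hE]
      exact mul_pos (mul_pos (hp v) ((hq1.1 v u).lt_of_ne (Ne.symm hq0)))
        ((hpw0 v u w).lt_of_ne (Ne.symm hpw'))
    have hm : margUW E p pw q1 u w ≠ 0 :=
      (lt_of_lt_of_le hj (jointD_le_margUW E p pw hp hq1 hpw0 v u w)).ne'
    exact (rstar_nonneg E p pw hp hq1 hpw0 w u).lt_of_ne
      (Ne.symm (rstar_ne_zero E p pw hp hq1 hpw0 hm))
  have hr2p : ∀ v u w, (v, u) ∈ E → q2 v u ≠ 0 → pw v u w ≠ 0 → 0 < r2 w u := by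
    intro v u w hE hq0 hpw'
    have hj : 0 < jointD E p pw q2 v u w := by
      unfold jointD
      rw [if_pos hE]
      exact mul_pos (mul_pos (hp v) ((hq2.1 v u).lt_of_ne (Ne.symm hq0)))
        ((hpw0 v u w).lt_of_ne (Ne.symm hpw'))
    have hm : margUW E p pw q2 u w ≠ 0 :=
      (lt_of_lt_of_le hj (jointD_le_margUW E p pw hp hq2 hpw0 v u w)).ne'
    exact (rstar_nonneg E p pw hp hq2 hpw0 w u).lt_of_ne
      (Ne.symm (rstar_ne_zero E p pw hp hq2 hpw0 hm))
  have hr10 : ∀ w u, 0 ≤ r1 w u := rstar_nonneg E p pw hp hq1 hpw0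
  have hr20 : ∀ w u, 0 ≤ r2 w u := rstar_nonneg E p pw hp hq2 hpw0
  have step1 : Obj E p pw (mixK be al q1 q2)
      ≤ GDE E p pw (mixK be al q1 q2) (fun w u => be * r1 w u + al * r2 w u) := by
    refine obj_le_gde E p pw hp hp1 hmixc hpw0 hpw1 _
      (fun w u => add_nonneg (mul_nonneg hbe.le (hr10 w u)) (mul_nonneg hal.le (hr20 w u)))
      (fun w => ?_) (fun u w h => ?_)
    · rw [Finset.sum_add_distrib, ← Finset.mul_sum, ← Finset.mul_sum]
      have b1 := rstar_sum_le_one E p pw hp hq1 hpw0 w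
      have b2 := rstar_sum_le_one E p pw hp hq2 hpw0 w
      nlinarith [Finset.sum_nonneg fun u (_ : u ∈ Finset.univ) => hr10 w u,
        Finset.sum_nonneg fun u (_ : u ∈ Finset.univ) => hr20 w u]
    · rw [margUW_mix E p pw u w] at h
      have hne : margUW E p pw q1 u w ≠ 0 ∨ margUW E p pw q2 u w ≠ 0 := by
        by_contra hc
        push_neg at hc
        exact h (by rw [hc.1, hc.2]; ring)
      have hpos : 0 < be * r1 w u + al * r2 w u := by
        rcases hne with h' | h'
        · have := (hr10 w u).lt_of_ne (Ne.symm (rstar_ne_zero E p pw hp hq1 hpw0 h'))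
          nlinarith [hr20 w u]
        · have := (hr20 w u).lt_of_ne (Ne.symm (rstar_ne_zero E p pw hp hq2 hpw0 h'))
          nlinarith [hr10 w u]
      exact hpos.ne'
  have step2 := gde_mix_le E p pw hp hpw0 r1 r2 hr10 hr20 hr1p hr2p hq1.1 hq2.1 hbe hal hs
  have e1 : GDE E p pw q1 r1 = Obj E p pw q1 := obj_eq_gde_rstar E p pw hp hq1 hpw0 hpw1
  have e2 : GDE E p pw q2 r2 = Obj E p pw q2 := obj_eq_gde_rstar E p pw hp hq2 hpw0 hpw1
  rw [e1, e2] at step2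
  linarith

end Mix

section LowerBound

variable (E : Finset (V × U)) (p : V → ℝ) (pw : V → U → W → ℝ) {q : V → U → ℝ}

lemma IUV_nonneg (hp : ∀ v, 0 < p v) (hp1 : ∑ v, p v = 1) (hq : CondDistOn E q) :
    0 ≤ IUV p q := by
  unfold IUV
  have key : ∀ v u, p v * q v u - p v * margU p q u
      ≤ p v * q v u * Real.log (q v u / margU p q u) := by
    intro v u
    have hb := pt_basic (hq.1 v u) (margU_nonneg E p hp hq u)
      (fun h => margU_pos E p hp hq h.ne')
    have h2 := mul_le_mul_of_nonneg_left hb (hp v).le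
    calc p v * q v u - p v * margU p q u = p v * (q v u - margU p q u) := by ring
      _ ≤ p v * (q v u * Real.log (q v u / margU p q u)) := h2
      _ = p v * q v u * Real.log (q v u / margU p q u) := by ring
  have hzero : ∑ v, ∑ u, (p v * q v u - p v * margU p q u) = 0 := by
    have h3 : ∀ v ∈ Finset.univ, ∑ u, (p v * q v u - p v * margU p q u) = (0:ℝ) := by
      intro v _
      rw [Finset.sum_sub_distrib, ← Finset.mul_sum, ← Finset.mul_sum, hq.2.1 v,
        sum_margU E p hp1 hq]
      ring
    rw [Finset.sum_congr rfl h3, Finset.sum_const_zero]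
  calc (0:ℝ) = ∑ v, ∑ u, (p v * q v u - p v * margU p q u) := hzero.symm
    _ ≤ ∑ v, ∑ u, p v * q v u * Real.log (q v u / margU p q u) :=
      Finset.sum_le_sum fun v _ => Finset.sum_le_sum fun u _ => key v u

lemma IUW_le (hp : ∀ v, 0 < p v) (hp1 : ∑ v, p v = 1) (hq : CondDistOn E q)
    (hpw0 : ∀ v u w, 0 ≤ pw v u w)
    (hpw1 : ∀ v u, (v, u) ∈ E → ∑ w, pw v u w = 1) :
    IUW E p pw q ≤ (Fintype.card U : ℝ) * Fintype.card W := by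
  unfold IUW
  have key : ∀ u w, margUW E p pw q u w *
      Real.log (margUW E p pw q u w / (margU p q u * margW E p pw q w)) ≤ 1 := by
    intro u w
    by_cases h : margUW E p pw q u w = 0
    · simp [h]
    · have hm : 0 < margUW E p pw q u w :=
        (margUW_nonneg E p pw hp hq hpw0 u w).lt_of_ne (Ne.symm h)
      have hu : 0 < margU p q u := lt_of_lt_of_le hm (margUW_le_margU E p pw hp hq hpw0 hpw1 u w)
      have hw : 0 < margW E p pw q w := lt_of_lt_of_le hm (margUW_le_margW E p pw hp hq hpw0 u w)
      have hw1 : margW E p pw q w ≤ 1 := margW_le_one E p pw hp hp1 hq hpw0 hpw1 w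
      have hs1 : margUW E p pw q u w / (margU p q u * margW E p pw q w)
          ≤ 1 / margW E p pw q w := by
        rw [div_le_div_iff₀ (by positivity) hw]
        calc margUW E p pw q u w * margW E p pw q w
            ≤ margU p q u * margW E p pw q w :=
              mul_le_mul_of_nonneg_right (margUW_le_margU E p pw hp hq hpw0 hpw1 u w) hw.le
          _ = 1 * (margU p q u * margW E p pw q w) := by ring
      have hs2 : Real.log (margUW E p pw q u w / (margU p q u * margW E p pw q w))
          ≤ -Real.log (margW E p pw q w) := by
        calc Real.log (margUW E p pw q u w / (margU p q u * margW E p pw q w))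
            ≤ Real.log (1 / margW E p pw q w) := Real.log_le_log (by positivity) hs1
          _ = -Real.log (margW E p pw q w) := by rw [one_div, Real.log_inv]
      have hlognn : 0 ≤ -Real.log (margW E p pw q w) := by
        simp only [neg_nonneg]
        exact Real.log_nonpos hw.le hw1
      have hs3 : margUW E p pw q u w * Real.log (margUW E p pw q u w /
            (margU p q u * margW E p pw q w))
          ≤ margW E p pw q w * (-Real.log (margW E p pw q w)) := by
        calc margUW E p pw q u w * Real.log (margUW E p pw q u w /
              (margU p q u * margW E p pw q w))
            ≤ margUW E p pw q u w * (-Real.log (margW E p pw q w)) :=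
              mul_le_mul_of_nonneg_left hs2 hm.le
          _ ≤ margW E p pw q w * (-Real.log (margW E p pw q w)) :=
              mul_le_mul_of_nonneg_right (margUW_le_margW E p pw hp hq hpw0 u w) hlognn
      have hlast : margW E p pw q w * (-Real.log (margW E p pw q w)) ≤ 1 := by
        have hinv : Real.log (1 / margW E p pw q w) ≤ 1 / margW E p pw q w - 1 :=
          Real.log_le_sub_one_of_pos (by positivity)
        rw [one_div, Real.log_inv] at hinv
        have h4 := mul_le_mul_of_nonneg_left hinv hw.le
        have hcc : margW E p pw q w * (margW E p pw q w)⁻¹ = 1 := mul_inv_cancel₀ hw.ne'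
        nlinarith
      linarith
  calc ∑ u, ∑ w, margUW E p pw q u w *
      Real.log (margUW E p pw q u w / (margU p q u * margW E p pw q w))
      ≤ ∑ _u : U, ∑ _w : W, (1:ℝ) :=
        Finset.sum_le_sum fun u _ => Finset.sum_le_sum fun w _ => key u w
    _ = (Fintype.card U : ℝ) * Fintype.card W := by
        simp [Finset.sum_const, Finset.card_univ, mul_comm]

lemma obj_lb (hp : ∀ v, 0 < p v) (hp1 : ∑ v, p v = 1) (hq : CondDistOn E q)
    (hpw0 : ∀ v u w, 0 ≤ pw v u w)
    (hpw1 : ∀ v u, (v, u) ∈ E → ∑ w, pw v u w = 1) :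
    -((Fintype.card U : ℝ) * Fintype.card W) ≤ Obj E p pw q := by
  have h1 := IUV_nonneg E p hp hp1 hq
  have h2 := IUW_le E p pw hp hp1 hq hpw0 hpw1
  unfold Obj
  linarith

end LowerBound


lemma coe_mul_ne_bot {c : ℝ} (hc : 0 < c) {x : EReal} (hx : x ≠ ⊥) : (c:EReal) * x ≠ ⊥ := by
  induction x using EReal.rec with
  | bot => exact absurd rfl hx
  | coe t => rw [← EReal.coe_mul]; exact EReal.coe_ne_bot _
  | top => rw [EReal.coe_mul_top_of_pos hc]; exact top_ne_bot

/-- the target-loss function `T(L)` is decreasing and convex on `[0,∞)`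
(with value `+∞` where infeasible). -/
theorem targetLoss_decreasing_convex
    (E : Finset (V × U)) (hE : ∀ v : V, ∃ u, (v, u) ∈ E)
    (p : V → ℝ) (hp : ∀ v, 0 < p v) (hp1 : ∑ v, p v = 1)
    (pw : V → U → W → ℝ) (hpw0 : ∀ v u w, 0 ≤ pw v u w)
    (hpw1 : ∀ v u, (v, u) ∈ E → ∑ w, pw v u w = 1)
    (lt : V → U → ℝ) (hlt : ∀ v u, 0 ≤ lt v u) :
    (∀ L1 L2 : ℝ, 0 ≤ L1 → L1 ≤ L2 →
        TL E p pw lt L2 ≤ TL E p pw lt L1)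
      ∧ (∀ L1 L2 α : ℝ, 0 ≤ L1 → 0 ≤ L2 → 0 ≤ α → α ≤ 1 →
        TL E p pw lt ((1 - α) * L1 + α * L2)
          ≤ ((1 - α : ℝ) : EReal) * TL E p pw lt L1 + ((α : ℝ) : EReal) * TL E p pw lt L2) := by
  have hbot : ∀ L : ℝ, (((-((Fintype.card U : ℝ) * Fintype.card W)) : ℝ) : EReal)
      ≤ TL E p pw lt L := by
    intro L
    apply le_sInf
    rintro x ⟨q, hq, hl, rfl⟩
    exact EReal.coe_le_coe_iff.mpr (obj_lb E p pw hp hp1 hq hpw0 hpw1)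
  have hnb : ∀ L : ℝ, TL E p pw lt L ≠ ⊥ := by
    intro L h
    have := hbot L
    rw [h, le_bot_iff] at this
    exact EReal.coe_ne_bot _ this
  constructor
  · intro L1 L2 _ h12
    apply sInf_le_sInf
    rintro x ⟨q, hq, hl, rfl⟩
    exact ⟨q, hq, hl.trans h12, rfl⟩
  · intro L1 L2 α _ _ hα0 hα1
    rcases eq_or_lt_of_le hα0 with h0 | h0
    · rw [← h0]
      norm_num
    rcases eq_or_lt_of_le hα1 with h1' | h1'
    · rw [h1']
      norm_num
    have hbe : (0:ℝ) < 1 - α := by linarith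
    have step : ∀ q1 q2 : V → U → ℝ, CondDistOn E q1 → CondDistOn E q2 →
        LossE E p lt q1 ≤ L1 → LossE E p lt q2 ≤ L2 →
        TL E p pw lt ((1 - α) * L1 + α * L2)
          ≤ (((1 - α) * Obj E p pw q1 + α * Obj E p pw q2 : ℝ) : EReal) := by
      intro q1 q2 hq1 hq2 hl1 hl2
      have hloss : LossE E p lt (mixK (1 - α) α q1 q2) ≤ (1 - α) * L1 + α * L2 := by
        rw [LossE_mix E p lt]
        exact add_le_add (mul_le_mul_of_nonneg_left hl1 hbe.le)
          (mul_le_mul_of_nonneg_left hl2 h0.le)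
      have hmem : ((Obj E p pw (mixK (1 - α) α q1 q2) : ℝ) : EReal) ∈
          {x : EReal | ∃ q, CondDistOn E q ∧ LossE E p lt q ≤ (1 - α) * L1 + α * L2 ∧
            x = (Obj E p pw q : EReal)} :=
        ⟨mixK (1 - α) α q1 q2, mix_cond E hq1 hq2 hbe.le h0.le (by ring), hloss, rfl⟩
      calc TL E p pw lt ((1 - α) * L1 + α * L2) ≤ _ := sInf_le hmem
        _ ≤ _ := EReal.coe_le_coe_iff.mpr
            (obj_mix_le E p pw hp hp1 hq1 hq2 hpw0 hpw1 hbe h0 (by ring))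
    by_cases hS1 : {x : EReal | ∃ q, CondDistOn E q ∧ LossE E p lt q ≤ L1 ∧
        x = (Obj E p pw q : EReal)}.Nonempty
    · by_cases hS2 : {x : EReal | ∃ q, CondDistOn E q ∧ LossE E p lt q ≤ L2 ∧
          x = (Obj E p pw q : EReal)}.Nonempty
      · -- both feasible
        obtain ⟨x1, q1w, hq1w, hl1w, hx1w⟩ := hS1
        obtain ⟨x2, q2w, hq2w, hl2w, hx2w⟩ := hS2
        have hT1top : TL E p pw lt L1 ≠ ⊤ := by
          have hle : TL E p pw lt L1 ≤ (Obj E p pw q1w : EReal) :=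
            sInf_le ⟨q1w, hq1w, hl1w, rfl⟩
          exact ne_top_of_le_ne_top (EReal.coe_ne_top _) hle
        have hT2top : TL E p pw lt L2 ≠ ⊤ := by
          have hle : TL E p pw lt L2 ≤ (Obj E p pw q2w : EReal) :=
            sInf_le ⟨q2w, hq2w, hl2w, rfl⟩
          exact ne_top_of_le_ne_top (EReal.coe_ne_top _) hle
        have hTtop : TL E p pw lt ((1 - α) * L1 + α * L2) ≠ ⊤ := by
          have := step q1w q2w hq1w hq2w hl1w hl2w
          exact ne_top_of_le_ne_top (EReal.coe_ne_top _) this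
        set t1 := (TL E p pw lt L1).toReal with ht1
        set t2 := (TL E p pw lt L2).toReal with ht2
        set t := (TL E p pw lt ((1 - α) * L1 + α * L2)).toReal with ht
        have hT1 : TL E p pw lt L1 = (t1 : EReal) := (EReal.coe_toReal hT1top (hnb L1)).symm
        have hT2 : TL E p pw lt L2 = (t2 : EReal) := (EReal.coe_toReal hT2top (hnb L2)).symm
        have hT : TL E p pw lt ((1 - α) * L1 + α * L2) = (t : EReal) :=
          (EReal.coe_toReal hTtop (hnb _)).symm
        rw [hT, hT1, hT2, ← EReal.coe_mul, ← EReal.coe_mul, ← EReal.coe_add,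
          EReal.coe_le_coe_iff]
        apply le_of_forall_pos_le_add
        intro ε hε
        have hlt1 : TL E p pw lt L1 < ((t1 + ε : ℝ) : EReal) := by
          rw [hT1]
          exact_mod_cast (by linarith : t1 < t1 + ε)
        have hlt2 : TL E p pw lt L2 < ((t2 + ε : ℝ) : EReal) := by
          rw [hT2]
          exact_mod_cast (by linarith : t2 < t2 + ε)
        obtain ⟨x1', hx1', hx1lt⟩ := sInf_lt_iff.mp hlt1
        obtain ⟨q1, hq1, hl1, rfl⟩ := hx1'
        obtain ⟨x2', hx2', hx2lt⟩ := sInf_lt_iff.mp hlt2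
        obtain ⟨q2, hq2, hl2, rfl⟩ := hx2'
        have hb1 : Obj E p pw q1 < t1 + ε := EReal.coe_lt_coe_iff.mp hx1lt
        have hb2 : Obj E p pw q2 < t2 + ε := EReal.coe_lt_coe_iff.mp hx2lt
        have hfin := step q1 q2 hq1 hq2 hl1 hl2
        rw [hT] at hfin
        have hfin' : t ≤ (1 - α) * Obj E p pw q1 + α * Obj E p pw q2 :=
          EReal.coe_le_coe_iff.mp hfin
        nlinarith
      · -- L2 infeasible
        have hT2 : TL E p pw lt L2 = ⊤ := by
          rw [TL, Set.not_nonempty_iff_eq_empty.mp hS2, _root_.sInf_empty]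
        rw [hT2, EReal.coe_mul_top_of_pos h0]
        rw [EReal.add_top_of_ne_bot (coe_mul_ne_bot hbe (hnb L1))]
        exact le_top
    · -- L1 infeasible
      have hT1 : TL E p pw lt L1 = ⊤ := by
        rw [TL, Set.not_nonempty_iff_eq_empty.mp hS1, _root_.sInf_empty]
      rw [hT1, EReal.coe_mul_top_of_pos hbe]
      rw [EReal.top_add_of_ne_bot (coe_mul_ne_bot h0 (hnb L2))]
      exact le_top
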